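/- The area of the hexagon {(x,y) : |x| ≤ 1/2, |y| ≤ 1/2, -1/2 + c ≤ x + y ≤ 1/2 + c} for 0 ≤ c < 1/2 equals 3/4 - c^2, and integrating 2·(3/4 - c²) over c ∈ [0, 1/2] and doubling gives 4/3 (the volume of the slice of [-1/2,1/2]^4 by x+y+z+t=0). -/

import Mathlib

open MeasureTheory intervalIntegral

lemma hex_area (c : ℝ) (hc0 : 0 ≤ c) (hc1 : c < 1/2) :
    volume {q : ℝ × ℝ | |q.1| ≤ 1/2 ∧ |q.2| ≤ 1/2 ∧
        -1/2 + c ≤ q.1 + q.2 ∧ q.1 + q.2 ≤ 1/2 + c}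
      = ENNReal.ofReal (3/4 - c^2) := by
  set S : Set (ℝ × ℝ) := {q : ℝ × ℝ | |q.1| ≤ 1/2 ∧ |q.2| ≤ 1/2 ∧
        -1/2 + c ≤ q.1 + q.2 ∧ q.1 + q.2 ≤ 1/2 + c} with hS
  have hmeas : MeasurableSet S := by
    rw [hS]
    apply MeasurableSet.inter
    · exact measurableSet_le (measurable_fst.abs) measurable_const
    apply MeasurableSet.inter
    · exact measurableSet_le (measurable_snd.abs) measurable_const
    exact (measurableSet_le measurable_const (measurable_fst.add measurable_snd)).inter
      (measurableSet_le (measurable_fst.add measurable_snd) measurable_const)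
  have hslice : ∀ x : ℝ, volume (Prod.mk x ⁻¹' S)
      = (Set.Icc (-(1/2) : ℝ) (1/2)).indicator
          (fun x => ENNReal.ofReal (1 - |x - c|)) x := by
    intro x
    by_cases hx : x ∈ Set.Icc (-(1/2):ℝ) (1/2)
    · have hxabs : |x| ≤ 1/2 := abs_le.2 ⟨hx.1, hx.2⟩
      have h1 : Prod.mk x ⁻¹' S
          = Set.Icc (max (-(1/2)) (-1/2 + c - x)) (min (1/2) (1/2 + c - x)) := by
        ext y
        simp only [hS, Set.mem_preimage, Set.mem_setOf_eq, Set.mem_Icc, abs_le,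
          le_min_iff, max_le_iff]
        constructor
        · rintro ⟨-, hy, h1, h2⟩
          exact ⟨⟨hy.1, by linarith⟩, hy.2, by linarith⟩
        · rintro ⟨⟨hy1, h1⟩, hy2, h2⟩
          exact ⟨⟨hx.1, hx.2⟩, ⟨hy1, hy2⟩, by linarith, by linarith⟩
      rw [h1, Real.volume_Icc, Set.indicator_of_mem hx]
      congr 1
      rcases le_total x c with h | h
      · rw [min_eq_left (by linarith), max_eq_right (by linarith),
          abs_of_nonpos (by linarith)]
        ring
      · rw [min_eq_right (by linarith), max_eq_left (by linarith),
          abs_of_nonneg (by linarith)]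
        ring
    · have h1 : Prod.mk x ⁻¹' S = ∅ := by
        ext y
        simp only [hS, Set.mem_preimage, Set.mem_setOf_eq, Set.mem_empty_iff_false,
          iff_false]
        rintro ⟨hax, -⟩
        exact hx ⟨(abs_le.1 hax).1, (abs_le.1 hax).2⟩
      rw [h1, Set.indicator_of_notMem hx]
      simp
  have key : volume S = ∫⁻ x, (Set.Icc (-(1/2) : ℝ) (1/2)).indicator
      (fun x => ENNReal.ofReal (1 - |x - c|)) x := by
    rw [Measure.volume_eq_prod, Measure.prod_apply hmeas]
    exact lintegral_congr hslice
  rw [key, lintegral_indicator measurableSet_Icc]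
  have hcont : Continuous fun x : ℝ => 1 - |x - c| := by fun_prop
  have hint : IntegrableOn (fun x : ℝ => 1 - |x - c|)
      (Set.Icc (-(1/2)) (1/2)) volume := hcont.integrableOn_Icc
  rw [← MeasureTheory.ofReal_integral_eq_lintegral_ofReal hint ?_]
  · congr 1
    have hle : (-(1/2) : ℝ) ≤ 1/2 := by norm_num
    rw [MeasureTheory.integral_Icc_eq_integral_Ioc,
      ← intervalIntegral.integral_of_le hle]
    have hsplit : ∫ x in (-(1/2):ℝ)..(1/2), (1 - |x - c|)
        = (∫ x in (-(1/2):ℝ)..c, (1 - |x - c|))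
          + ∫ x in c..(1/2), (1 - |x - c|) := by
      rw [intervalIntegral.integral_add_adjacent_intervals]
      · exact hcont.intervalIntegrable _ _
      · exact hcont.intervalIntegrable _ _
    rw [hsplit]
    have e1 : ∫ x in (-(1/2):ℝ)..c, (1 - |x - c|)
        = ∫ x in (-(1/2):ℝ)..c, ((1 - c) + x) := by
      apply intervalIntegral.integral_congr
      intro x hx
      rw [Set.uIcc_of_le (by linarith)] at hx
      show 1 - |x - c| = 1 - c + x
      rw [abs_of_nonpos (by linarith [hx.2])]
      ring
    have e2 : ∫ x in c..(1/2:ℝ), (1 - |x - c|)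
        = ∫ x in c..(1/2:ℝ), ((1 + c) - x) := by
      apply intervalIntegral.integral_congr
      intro x hx
      rw [Set.uIcc_of_le (by linarith)] at hx
      show 1 - |x - c| = 1 + c - x
      rw [abs_of_nonneg (by linarith [hx.1])]
      ring
    rw [e1, e2]
    rw [integral_add intervalIntegrable_const intervalIntegrable_id,
      integral_sub intervalIntegrable_const intervalIntegrable_id,
      intervalIntegral.integral_const, intervalIntegral.integral_const, integral_id, integral_id]
    simp only [smul_eq_mul]
    ring
  · filter_upwards [ae_restrict_mem measurableSet_Icc] with x hx
    have : |x - c| ≤ 1 := by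
      rw [abs_le]; constructor <;> [linarith [hx.1]; linarith [hx.2]]
    simp only [Pi.zero_apply]
    linarith

theorem hexagon_area_and_volume :
    (∀ c : ℝ, 0 ≤ c → c < 1/2 →
      volume {q : ℝ × ℝ | |q.1| ≤ 1/2 ∧ |q.2| ≤ 1/2 ∧
          -1/2 + c ≤ q.1 + q.2 ∧ q.1 + q.2 ≤ 1/2 + c}
        = ENNReal.ofReal (3/4 - c^2)) ∧
    2 * ∫ c in (0:ℝ)..(1/2), 2 * (3/4 - c^2) = 4/3 := by
  constructor
  · exact hex_area
  · rw [intervalIntegral.integral_const_mul, integral_sub intervalIntegrable_const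
      (intervalIntegrable_pow 2), intervalIntegral.integral_const, integral_pow]
    norm_num
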